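/- arXiv:2512.21461 — 3 statements merged into one kernel-verified Lean document; each statement's English description precedes it below -/
import Mathlib

section
/- Let Γ be a finite connected graph on vertices {1,…,n} with n ≥ 2 (no multiple edges, no loops), with intersection matrix m_{ij} = 1 if {i,j} is an edge and m_{ii} = e_i² < 0, negative definite, and let Z = Σ z_i e_i be the fundamental cycle (the minimal nonzero effective anti-nef cycle). Suppose there exist two distinct vertices i₁, i₂ with z_{i₁} = z_{i₂} = 1 such that (Z - e_i)·e_i = 1 for i ∈ {i₁, i₂} and (Z - e_i)·e_i = 2 for all i ∉ {i₁, i₂}. Then Γ is a chain (path graph) with endpoints i₁ and i₂, and Z is reduced, i.e. z_i = 1 for all i. -/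
/-- The pairing `x·y = xᵗ M y` over `ℤ`. -/
def pairZ {n : ℕ} (M : Matrix (Fin n) (Fin n) ℤ) (x y : Fin n → ℤ) : ℤ :=
  dotProduct x (M.mulVec y)

/-- If the fundamental cycle `Z` of a connected negative definite weighted
graph has two distinct vertices `i₁, i₂` with coefficient `1` such that
`(Z - e_i)·e_i = 1` for `i ∈ {i₁,i₂}` and `(Z - e_i)·e_i = 2` otherwise,
then the graph is a chain with endpoints `i₁, i₂` and `Z` is reduced. -/
theorem stmt_10 {n : ℕ} (hn : 2 ≤ n) (G : SimpleGraph (Fin n))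
    [DecidableRel G.Adj] (hconn : G.Connected)
    (M : Matrix (Fin n) (Fin n) ℤ) (hsym : M.IsSymm)
    (hadj : ∀ i j, i ≠ j → M i j = if G.Adj i j then 1 else 0)
    (hdiag : ∀ i, M i i < 0)
    (hneg : ∀ x : Fin n → ℤ, x ≠ 0 → dotProduct x (M.mulVec x) < 0)
    (Z : Fin n → ℤ) (hZne : Z ≠ 0) (hZeff : ∀ i, 0 ≤ Z i)
    (hZnef : ∀ i, pairZ M Z (Pi.single i 1) ≤ 0)
    (hZmin : ∀ D : Fin n → ℤ, D ≠ 0 → (∀ i, 0 ≤ D i) →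
      (∀ i, pairZ M D (Pi.single i 1) ≤ 0) → ∀ i, Z i ≤ D i)
    (i₁ i₂ : Fin n) (hne : i₁ ≠ i₂) (hz₁ : Z i₁ = 1) (hz₂ : Z i₂ = 1)
    (h1 : ∀ i, i = i₁ ∨ i = i₂ → pairZ M (Z - Pi.single i 1) (Pi.single i 1) = 1)
    (h2 : ∀ i, i ≠ i₁ → i ≠ i₂ → pairZ M (Z - Pi.single i 1) (Pi.single i 1) = 2) :
    (∀ i, Z i = 1) ∧
    ∃ σ : Fin n ≃ Fin n, σ ⟨0, by omega⟩ = i₁ ∧ σ ⟨n - 1, by omega⟩ = i₂ ∧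
      ∀ a b : Fin n, G.Adj (σ a) (σ b) ↔ ((a : ℕ) + 1 = b ∨ (b : ℕ) + 1 = a) := by
  classical
  -- pairing formula
  have key : ∀ i, pairZ M Z (Pi.single i 1)
      = Z i * M i i + ∑ j ∈ G.neighborFinset i, Z j := by
    intro i
    have hpair : pairZ M Z (Pi.single i 1) = ∑ j, Z j * M j i := by
      simp [pairZ, dotProduct, Matrix.mulVec_single]
    rw [hpair, ← Finset.add_sum_erase Finset.univ _ (Finset.mem_univ i)]
    congr 1
    rw [Finset.sum_congr rfl (fun j hj => by
      rw [hadj j i (Finset.ne_of_mem_erase hj), mul_ite, mul_one, mul_zero])]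
    rw [← Finset.sum_filter]
    apply Finset.sum_congr _ (fun _ _ => rfl)
    ext j
    simp only [Finset.mem_filter, Finset.mem_erase, Finset.mem_univ, true_and, and_true,
      SimpleGraph.mem_neighborFinset]
    constructor
    · rintro ⟨-, h⟩; exact h.symm
    · intro h; exact ⟨h.ne', h.symm⟩
  have keysub : ∀ i, pairZ M (Z - Pi.single i 1) (Pi.single i 1)
      = (Z i - 1) * M i i + ∑ j ∈ G.neighborFinset i, Z j := by
    intro i
    have hsplit : pairZ M (Z - Pi.single i 1) (Pi.single i 1)
        = pairZ M Z (Pi.single i 1) - pairZ M (Pi.single i 1) (Pi.single i 1) := by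
      simp [pairZ, sub_dotProduct]
    have hself : pairZ M (Pi.single i 1) (Pi.single i 1) = M i i := by
      simp [pairZ, Matrix.mulVec_single, single_dotProduct]
    rw [hsplit, key, hself]; ring
  -- propagation along walks
  have hreach : ∀ (Pr : Fin n → Prop), (∀ a b, G.Adj a b → Pr a → Pr b) →
      ∀ a, Pr a → ∀ b, Pr b := by
    intro Pr hcl a ha b
    have hwalk : ∀ x y, (w : G.Walk x y) → Pr x → Pr y := by
      intro x y w
      induction w with
      | nil => exact id
      | cons h _ ih => exact fun hx => ih (hcl _ _ h hx)
    obtain ⟨w⟩ := hconn.preconnected a b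
    exact hwalk a b w ha
  -- Z is everywhere positive
  have hpos : ∀ i, 1 ≤ Z i := by
    have hcl : ∀ a b, G.Adj a b → 1 ≤ Z a → 1 ≤ Z b := by
      intro a b hab ha
      by_contra hb
      have hzb : Z b = 0 := le_antisymm (by omega) (hZeff b)
      have h0 := hZnef b
      rw [key b, hzb, zero_mul, zero_add] at h0
      have hamem : a ∈ G.neighborFinset b := by
        rw [SimpleGraph.mem_neighborFinset]; exact hab.symm
      have hS1 : (1:ℤ) ≤ ∑ j ∈ G.neighborFinset b, Z j :=
        le_trans ha (Finset.single_le_sum (fun j _ => hZeff j) hamem)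
      omega
    obtain ⟨i0, hi0⟩ : ∃ i, Z i ≠ 0 := Function.ne_iff.mp hZne
    exact hreach _ hcl i0 (by have := hZeff i0; omega)
  -- neighbor sums
  have hS₁ : ∑ j ∈ G.neighborFinset i₁, Z j = 1 := by
    have := h1 i₁ (Or.inl rfl)
    rw [keysub, hz₁, sub_self, zero_mul, zero_add] at this
    exact this
  have hS₂ : ∑ j ∈ G.neighborFinset i₂, Z j = 1 := by
    have := h1 i₂ (Or.inr rfl)
    rw [keysub, hz₂, sub_self, zero_mul, zero_add] at this
    exact this
  have hSmid : ∀ i, i ≠ i₁ → i ≠ i₂ → Z i = 1 →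
      ∑ j ∈ G.neighborFinset i, Z j = 2 := by
    intro i hi1 hi2 hzi
    have := h2 i hi1 hi2
    rw [keysub, hzi, sub_self, zero_mul, zero_add] at this
    exact this
  -- a finset summing to 1 is a singleton
  have hsingle : ∀ (T : Finset (Fin n)), (∑ j ∈ T, Z j) = 1 → ∃ b, T = {b} ∧ Z b = 1 := by
    intro T hT
    have hle : (T.card : ℤ) ≤ ∑ j ∈ T, Z j := by
      calc (T.card : ℤ) = ∑ _j ∈ T, (1:ℤ) := by simp
      _ ≤ ∑ j ∈ T, Z j := Finset.sum_le_sum (fun j _ => hpos j)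
    have hne' : 0 < T.card := by
      rcases T.eq_empty_or_nonempty with h | h
      · rw [h] at hT; simp at hT
      · exact Finset.card_pos.mpr h
    have hc : T.card = 1 := by rw [hT] at hle; omega
    obtain ⟨b, hb⟩ := Finset.card_eq_one.mp hc
    refine ⟨b, hb, ?_⟩
    rw [hb, Finset.sum_singleton] at hT; exact hT
  -- a finset summing to 2 containing an element of value 1 is a pair
  have hpairset : ∀ (T : Finset (Fin n)) (a : Fin n), a ∈ T → Z a = 1 →
      (∑ j ∈ T, Z j) = 2 → ∃ b, b ≠ a ∧ T = {a, b} ∧ Z b = 1 := by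
    intro T a haT hza hT
    have hsum : Z a + ∑ j ∈ T.erase a, Z j = ∑ j ∈ T, Z j := Finset.add_sum_erase T Z haT
    have h1' : (∑ j ∈ T.erase a, Z j) = 1 := by omega
    obtain ⟨b, hb, hzb⟩ := hsingle _ h1'
    have hba : b ≠ a := Finset.ne_of_mem_erase (hb ▸ Finset.mem_singleton_self b)
    refine ⟨b, hba, ?_, hzb⟩
    have hins := Finset.insert_erase haT
    rw [hb] at hins
    rw [← hins]
  -- main walk construction
  have main : ∀ k, 1 ≤ k →
      (∃ v : ℕ → Fin n, v 0 = i₁ ∧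
        (∀ j l, j ≤ k → l ≤ k → v j = v l → j = l) ∧
        (∀ j, j ≤ k → v j ≠ i₂) ∧
        G.neighborFinset i₁ = {v 1} ∧
        (∀ j, 0 < j → j < k → G.neighborFinset (v j) = {v (j-1), v (j+1)}) ∧
        (∀ j, j ≤ k → Z (v j) = 1)) ∨
      (∃ m, 1 ≤ m ∧ ∃ v : ℕ → Fin n, v 0 = i₁ ∧ v m = i₂ ∧
        (∀ j l, j ≤ m → l ≤ m → v j = v l → j = l) ∧
        G.neighborFinset i₁ = {v 1} ∧
        (∀ j, 0 < j → j < m → G.neighborFinset (v j) = {v (j-1), v (j+1)}) ∧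
        G.neighborFinset i₂ = {v (m-1)} ∧
        (∀ j, j ≤ m → Z (v j) = 1)) := by
    intro k hk
    induction k with
    | zero => omega
    | succ k ih =>
      rcases Nat.eq_zero_or_pos k with hk0 | hkpos
      · -- base case : k + 1 = 1
        subst hk0
        obtain ⟨b, hFb, hzb⟩ := hsingle _ hS₁
        have hab : G.Adj i₁ b := by
          rw [← SimpleGraph.mem_neighborFinset, hFb]
          exact Finset.mem_singleton_self b
        by_cases hbi₂ : b = i₂
        · right
          refine ⟨1, le_rfl, fun j => if j = 0 then i₁ else b, ?_, ?_, ?_, ?_, ?_, ?_, ?_⟩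
          all_goals
            have hw0 : (fun j => if j = 0 then i₁ else b) 0 = i₁ := if_pos rfl
          all_goals
            have hw1 : ∀ j : ℕ, j ≠ 0 → (fun j => if j = 0 then i₁ else b) j = b :=
              fun j hj => if_neg hj
          · exact hw0
          · rw [hw1 1 one_ne_zero]; exact hbi₂
          · intro j l hj hl hvl
            interval_cases j <;> interval_cases l
            · rfl
            · rw [hw0, hw1 1 one_ne_zero] at hvl
              exact absurd (hvl.trans hbi₂) hne
            · rw [hw0, hw1 1 one_ne_zero] at hvl
              exact absurd (hvl.symm.trans hbi₂) hne
            · rfl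
          · rw [hw1 1 one_ne_zero]
            exact hFb
          · intro j hj1 hj2; omega
          · show G.neighborFinset i₂ = {(fun j => if j = 0 then i₁ else b) (1-1)}
            rw [hw0]
            obtain ⟨c, hFc, hzc⟩ := hsingle _ hS₂
            have hmemc : i₁ ∈ G.neighborFinset i₂ := by
              rw [SimpleGraph.mem_neighborFinset]
              exact (hbi₂ ▸ hab).symm
            rw [hFc] at hmemc ⊢
            simp only [Finset.mem_singleton] at hmemc
            rw [← hmemc]
          · intro j hj
            interval_cases j
            · rw [hw0]; exact hz₁
            · rw [hw1 1 one_ne_zero]; exact hzb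
        · left
          refine ⟨fun j => if j = 0 then i₁ else b, ?_, ?_, ?_, ?_, ?_, ?_⟩
          all_goals
            have hw0 : (fun j => if j = 0 then i₁ else b) 0 = i₁ := if_pos rfl
          all_goals
            have hw1 : ∀ j : ℕ, j ≠ 0 → (fun j => if j = 0 then i₁ else b) j = b :=
              fun j hj => if_neg hj
          · exact hw0
          · intro j l hj hl hvl
            have hne1b : i₁ ≠ b := hab.ne
            interval_cases j <;> interval_cases l
            · rfl
            · rw [hw0, hw1 1 one_ne_zero] at hvl
              exact absurd hvl hne1b
            · rw [hw0, hw1 1 one_ne_zero] at hvl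
              exact absurd hvl.symm hne1b
            · rfl
          · intro j hj
            interval_cases j
            · rw [hw0]; exact hne
            · rw [hw1 1 one_ne_zero]; exact hbi₂
          · rw [hw1 1 one_ne_zero]
            exact hFb
          · intro j hj1 hj2; omega
          · intro j hj
            interval_cases j
            · rw [hw0]; exact hz₁
            · rw [hw1 1 one_ne_zero]; exact hzb
      · -- inductive step, 1 ≤ k
        rcases ih hkpos with ⟨v, hv0, hinj, hni₂, hend, hmid, hzv⟩ | hQ
        · -- extend the partial chain
          have hzak : Z (v k) = 1 := hzv k le_rfl
          have hane1 : v k ≠ i₁ := by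
            intro h
            have := hinj k 0 le_rfl (by omega) (by rw [h, hv0])
            omega
          have hane2 : v k ≠ i₂ := hni₂ k le_rfl
          have hSa := hSmid (v k) hane1 hane2 hzak
          have hadjprev : G.Adj (v k) (v (k-1)) := by
            rcases Nat.eq_or_lt_of_le hkpos with h1' | h2'
            · have hk1 : k = 1 := h1'.symm
              subst hk1
              have hm : v 1 ∈ G.neighborFinset i₁ := by
                rw [hend]; exact Finset.mem_singleton_self _
              rw [SimpleGraph.mem_neighborFinset] at hm
              simpa [hv0] using hm.symm
            · have hm := hmid (k-1) (by omega) (by omega)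
              have hmem : v k ∈ G.neighborFinset (v (k-1)) := by
                rw [hm]
                have he : (k-1) + 1 = k := by omega
                rw [he]
                simp
              rw [SimpleGraph.mem_neighborFinset] at hmem
              exact hmem.symm
          have hpmem : v (k-1) ∈ G.neighborFinset (v k) := by
            rw [SimpleGraph.mem_neighborFinset]; exact hadjprev
          have hzp : Z (v (k-1)) = 1 := hzv (k-1) (by omega)
          obtain ⟨b, hbp, hFa, hzb⟩ := hpairset _ _ hpmem hzp hSa
          have hadjb : G.Adj (v k) b := by
            rw [← SimpleGraph.mem_neighborFinset, hFa]
            simp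
          have hbnot : ∀ j, j ≤ k → b ≠ v j := by
            intro j hj hbj
            rcases Nat.lt_or_ge j k with hjk | hjk
            · rcases Nat.eq_zero_or_pos j with hj0 | hjpos
              · subst hj0
                rw [hv0] at hbj
                have hm : v k ∈ G.neighborFinset i₁ := by
                  rw [SimpleGraph.mem_neighborFinset]
                  exact (hbj ▸ hadjb).symm
                rw [hend] at hm
                simp only [Finset.mem_singleton] at hm
                have hk1 := hinj k 1 le_rfl (by omega) hm
                apply hbp
                rw [hbj]
                have hz0 : k - 1 = 0 := by omega
                rw [hz0, hv0]
              · have hm := hmid j hjpos hjk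
                have hmem2 : v k ∈ G.neighborFinset (v j) := by
                  rw [SimpleGraph.mem_neighborFinset]
                  exact (hbj ▸ hadjb).symm
                rw [hm] at hmem2
                simp only [Finset.mem_insert, Finset.mem_singleton] at hmem2
                rcases hmem2 with h | h
                · have := hinj k (j-1) le_rfl (by omega) h; omega
                · have := hinj k (j+1) le_rfl (by omega) h
                  apply hbp
                  rw [hbj]
                  congr 1
                  omega
            · have hjk' : j = k := le_antisymm hj hjk
              subst hjk'
              exact hadjb.ne' hbj
          have hup : ∀ j, j ≠ k+1 → Function.update v (k+1) b j = v j :=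
            fun j h => Function.update_of_ne h _ _
          have htop : Function.update v (k+1) b (k+1) = b := Function.update_self _ _ _
          by_cases hbi₂ : b = i₂
          · right
            refine ⟨k+1, by omega, Function.update v (k+1) b, ?_, ?_, ?_, ?_, ?_, ?_, ?_⟩
            · rw [hup 0 (by omega), hv0]
            · rw [htop, hbi₂]
            · intro j l hj hl hvl
              by_cases hj' : j = k+1 <;> by_cases hl' : l = k+1
              · omega
              · subst hj'
                rw [htop, hup l hl'] at hvl
                exact absurd hvl (hbnot l (by omega))
              · subst hl'
                rw [htop, hup j hj'] at hvl
                exact absurd hvl.symm (hbnot j (by omega))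
              · rw [hup j hj', hup l hl'] at hvl
                exact hinj j l (by omega) (by omega) hvl
            · rw [hup 1 (by omega)]
              exact hend
            · intro j hj0 hjk1
              rw [hup j (by omega)]
              by_cases hjk : j = k
              · subst hjk
                rw [hup (j-1) (by omega), htop]
                exact hFa
              · rw [hup (j-1) (by omega), hup (j+1) (by omega)]
                exact hmid j hj0 (by omega)
            · rw [show k+1-1 = k by omega, hup k (by omega)]
              obtain ⟨c, hFc, hzc⟩ := hsingle _ hS₂
              have hmemc : v k ∈ G.neighborFinset i₂ := by
                rw [SimpleGraph.mem_neighborFinset]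
                exact (hbi₂ ▸ hadjb).symm
              rw [hFc] at hmemc ⊢
              simp only [Finset.mem_singleton] at hmemc
              rw [← hmemc]
            · intro j hj
              by_cases hj' : j = k+1
              · subst hj'; rw [htop]; exact hzb
              · rw [hup j hj']; exact hzv j (by omega)
          · left
            refine ⟨Function.update v (k+1) b, ?_, ?_, ?_, ?_, ?_, ?_⟩
            · rw [hup 0 (by omega), hv0]
            · intro j l hj hl hvl
              by_cases hj' : j = k+1 <;> by_cases hl' : l = k+1
              · omega
              · subst hj'
                rw [htop, hup l hl'] at hvl
                exact absurd hvl (hbnot l (by omega))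
              · subst hl'
                rw [htop, hup j hj'] at hvl
                exact absurd hvl.symm (hbnot j (by omega))
              · rw [hup j hj', hup l hl'] at hvl
                exact hinj j l (by omega) (by omega) hvl
            · intro j hj
              by_cases hj' : j = k+1
              · subst hj'; rw [htop]; exact hbi₂
              · rw [hup j hj']; exact hni₂ j (by omega)
            · rw [hup 1 (by omega)]
              exact hend
            · intro j hj0 hjk1
              rw [hup j (by omega)]
              by_cases hjk : j = k
              · subst hjk
                rw [hup (j-1) (by omega), htop]
                exact hFa
              · rw [hup (j-1) (by omega), hup (j+1) (by omega)]
                exact hmid j hj0 (by omega)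
            · intro j hj
              by_cases hj' : j = k+1
              · subst hj'; rw [htop]; exact hzb
              · rw [hup j hj']; exact hzv j (by omega)
        · right; exact hQ
  -- the walk cannot avoid i₂ forever
  rcases main n (by omega) with ⟨v, hv0, hinj, _, _, _, _⟩ | hQ
  · exfalso
    have hinjf : Function.Injective (fun j : Fin (n+1) => v j) := by
      intro x y h
      exact Fin.ext (hinj x y (by omega) (by omega) h)
    have hcard := Fintype.card_le_of_injective _ hinjf
    simp only [Fintype.card_fin] at hcard
    omega
  obtain ⟨m, hm1, v, hv0, hvm, hinj, hend, hmid, hend2, hzv⟩ := hQ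
  -- the chain covers every vertex
  have hcover : ∀ x : Fin n, ∃ j, j ≤ m ∧ v j = x := by
    have hcl : ∀ a b, G.Adj a b → (∃ j, j ≤ m ∧ v j = a) → (∃ j, j ≤ m ∧ v j = b) := by
      rintro a b hab ⟨j, hj, rfl⟩
      have hbmem : b ∈ G.neighborFinset (v j) := by
        rw [SimpleGraph.mem_neighborFinset]; exact hab
      rcases Nat.eq_zero_or_pos j with hj0 | hjpos
      · subst hj0
        rw [hv0, hend] at hbmem
        simp only [Finset.mem_singleton] at hbmem
        exact ⟨1, by omega, hbmem.symm⟩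
      · rcases Nat.lt_or_ge j m with hjm | hjm
        · rw [hmid j hjpos hjm] at hbmem
          simp only [Finset.mem_insert, Finset.mem_singleton] at hbmem
          rcases hbmem with h | h
          · exact ⟨j-1, by omega, h.symm⟩
          · exact ⟨j+1, by omega, h.symm⟩
        · have hjm' : j = m := le_antisymm hj hjm
          rw [hjm', hvm, hend2] at hbmem
          simp only [Finset.mem_singleton] at hbmem
          exact ⟨m-1, by omega, hbmem.symm⟩
    exact hreach _ hcl i₁ ⟨0, by omega, hv0⟩
  -- the chain has exactly n vertices
  have hmn : m + 1 = n := by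
    have hbij : Function.Bijective (fun j : Fin (m+1) => v j) := by
      constructor
      · intro x y h
        exact Fin.ext (hinj x y (by omega) (by omega) h)
      · intro x
        obtain ⟨j, hj, hvj⟩ := hcover x
        exact ⟨⟨j, by omega⟩, hvj⟩
    have := Fintype.card_of_bijective hbij
    simpa using this
  constructor
  · intro i
    obtain ⟨j, hj, hvj⟩ := hcover i
    rw [← hvj]
    exact hzv j hj
  · have hbij : Function.Bijective (fun j : Fin n => v j) := by
      constructor
      · intro x y h
        exact Fin.ext (hinj x y (by omega) (by omega) h)
      · intro x
        obtain ⟨j, hj, hvj⟩ := hcover x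
        exact ⟨⟨j, by omega⟩, hvj⟩
    refine ⟨Equiv.ofBijective _ hbij, ?_, ?_, ?_⟩
    · simp only [Equiv.ofBijective_apply]
      exact hv0
    · simp only [Equiv.ofBijective_apply]
      show v ((n:ℕ) - 1) = i₂
      rw [show n - 1 = m by omega]
      exact hvm
    · intro a b
      simp only [Equiv.ofBijective_apply]
      have hadjcons : ∀ j, j < m → G.Adj (v j) (v (j+1)) := by
        intro j hj
        rcases Nat.eq_zero_or_pos j with hj0 | hjpos
        · subst hj0
          have hm2 : v 1 ∈ G.neighborFinset i₁ := by
            rw [hend]; exact Finset.mem_singleton_self _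
          rw [SimpleGraph.mem_neighborFinset] at hm2
          rw [hv0]
          exact hm2
        · have hm2 : v (j+1) ∈ G.neighborFinset (v j) := by
            rw [hmid j hjpos hj]
            simp
          rw [SimpleGraph.mem_neighborFinset] at hm2
          exact hm2
      constructor
      · intro hab
        have hbmem : v (b:ℕ) ∈ G.neighborFinset (v (a:ℕ)) := by
          rw [SimpleGraph.mem_neighborFinset]; exact hab
        rcases Nat.eq_zero_or_pos (a:ℕ) with ha0 | hapos
        · rw [ha0, hv0, hend] at hbmem
          simp only [Finset.mem_singleton] at hbmem
          have := hinj b 1 (by omega) (by omega) hbmem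
          left; omega
        · rcases Nat.lt_or_ge (a:ℕ) m with ham | ham
          · rw [hmid (a:ℕ) hapos ham] at hbmem
            simp only [Finset.mem_insert, Finset.mem_singleton] at hbmem
            rcases hbmem with h | h
            · have := hinj b ((a:ℕ)-1) (by omega) (by omega) h
              right; omega
            · have := hinj b ((a:ℕ)+1) (by omega) (by omega) h
              left; omega
          · have ha' : (a:ℕ) = m := by omega
            rw [ha', hvm, hend2] at hbmem
            simp only [Finset.mem_singleton] at hbmem
            have := hinj b (m-1) (by omega) (by omega) hbmem
            right; omega
      · rintro (h | h)
        · have hlt : (a:ℕ) < m := by omega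
          have := hadjcons (a:ℕ) hlt
          rw [← h]
          exact this
        · have hlt : (b:ℕ) < m := by omega
          have := hadjcons (b:ℕ) hlt
          rw [← h]
          exact this.symm
end

section
/- Let Γ be a finite connected simple graph with negative definite intersection matrix M (m_{ij} = 1 for edges, m_{ii} = e_i²), and let Z = Σ z_i e_i be the fundamental cycle. Suppose there is a vertex i₀ with z_{i₀} = 2, (Z - e_{i₀})·e_{i₀} = 1, and (Z - e_i)·e_i = 2 for all i ≠ i₀. Let e_1,…,e_r be the neighbors of i₀ and assume z_j = 1 for 1 ≤ j ≤ r. Then the vertex set of Γ is exactly {i₀, 1, …, r}, each e_j (1 ≤ j ≤ r) is adjacent only to i₀, and e_{i₀}² = -r + 1. -/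
lemma pair_single_eq {n : ℕ} (M : Matrix (Fin n) (Fin n) ℤ) (Z : Fin n → ℤ) (i : Fin n) :
    pairZ M Z (Pi.single i 1) = ∑ j, Z j * M j i := by
  unfold pairZ dotProduct Matrix.mulVec
  simp [dotProduct, Pi.single_apply, mul_ite, mul_one, mul_zero, Finset.sum_ite_eq']

lemma walk_prop {n : ℕ} {G : SimpleGraph (Fin n)} (P : Fin n → Prop)
    (step : ∀ u v, G.Adj u v → P u → P v) :
    ∀ u v, G.Walk u v → P u → P v := by
  intro u v p
  induction p with
  | nil => exact id
  | cons h _ ih => intro hu; exact ih (step _ _ h hu)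

/-- Case (4.b) of the nearly Gorenstein criterion with reduced coefficients on
the neighbors of the distinguished vertex `i₀`: the graph consists exactly of
`i₀` and its `r` neighbors, each neighbor is adjacent only to `i₀`, and
`e_{i₀}² = -r + 1`. -/
theorem stmt_11 {n r : ℕ} (G : SimpleGraph (Fin n)) [DecidableRel G.Adj]
    (hconn : G.Connected)
    (M : Matrix (Fin n) (Fin n) ℤ) (hsym : M.IsSymm)
    (hadj : ∀ i j, i ≠ j → M i j = if G.Adj i j then 1 else 0)
    (hneg : ∀ x : Fin n → ℤ, x ≠ 0 → dotProduct x (M.mulVec x) < 0)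
    (Z : Fin n → ℤ) (hZne : Z ≠ 0) (hZeff : ∀ i, 0 ≤ Z i)
    (hZnef : ∀ i, pairZ M Z (Pi.single i 1) ≤ 0)
    (hZmin : ∀ D : Fin n → ℤ, D ≠ 0 → (∀ i, 0 ≤ D i) →
      (∀ i, pairZ M D (Pi.single i 1) ≤ 0) → ∀ i, Z i ≤ D i)
    (i₀ : Fin n) (hz₀ : Z i₀ = 2)
    (h1 : pairZ M (Z - Pi.single i₀ 1) (Pi.single i₀ 1) = 1)
    (h2 : ∀ i, i ≠ i₀ → pairZ M (Z - Pi.single i 1) (Pi.single i 1) = 2)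
    (ν : Fin r → Fin n) (hinj : Function.Injective ν)
    (hnbr : ∀ j, G.Adj i₀ (ν j)) (hall : ∀ v, G.Adj i₀ v → ∃ j, ν j = v)
    (hred : ∀ j, Z (ν j) = 1) :
    (∀ v : Fin n, v = i₀ ∨ ∃ j, ν j = v) ∧
    (∀ j v, G.Adj (ν j) v → v = i₀) ∧
    M i₀ i₀ = -(r : ℤ) + 1 := by
  classical
  set S : Fin n → ℤ := fun i => ∑ j ∈ G.neighborFinset i, Z j with hS
  have hpair : ∀ i, pairZ M Z (Pi.single i 1) = Z i * M i i + S i := by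
    intro i
    rw [pair_single_eq, ← Finset.add_sum_erase Finset.univ (fun j => Z j * M j i)
      (Finset.mem_univ i)]
    congr 1
    have : ∀ j ∈ Finset.univ.erase i, Z j * M j i = if j ∈ G.neighborFinset i then Z j else 0 := by
      intro j hj
      rw [hadj j i (Finset.ne_of_mem_erase hj)]
      by_cases h : G.Adj j i
      · simp [h, (SimpleGraph.mem_neighborFinset _ _ _).2 h.symm]
      · have hnm : j ∉ G.neighborFinset i := by
          rw [SimpleGraph.mem_neighborFinset]
          exact fun h' => h h'.symm
        simp [h, hnm]
    rw [Finset.sum_congr rfl this, Finset.sum_ite_mem]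
    congr 1
    rw [Finset.inter_eq_right]
    intro j hj
    exact Finset.mem_erase.2 ⟨fun h => G.irrefl (h ▸ (SimpleGraph.mem_neighborFinset _ _ _).1 hj),
      Finset.mem_univ j⟩
  have hpairself : ∀ i : Fin n, pairZ M (Pi.single i 1) (Pi.single i 1) = M i i := by
    intro i
    rw [pair_single_eq]
    simp [Pi.single_apply, ite_mul, Finset.sum_ite_eq']
  have hpair2 : ∀ i, pairZ M (Z - Pi.single i 1) (Pi.single i 1) = Z i * M i i + S i - M i i := by
    intro i
    have hsplit : pairZ M (Z - Pi.single i 1) (Pi.single i 1)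
        = pairZ M Z (Pi.single i 1) - pairZ M (Pi.single i 1) (Pi.single i 1) := by
      simp [pairZ, sub_dotProduct]
    rw [hsplit, hpair, hpairself]
  have hpos : ∀ v, 1 ≤ Z v := by
    obtain ⟨u, hu⟩ : ∃ u, Z u ≠ 0 := by
      by_contra h
      push_neg at h
      exact hZne (funext fun i => h i)
    have hu1 : 1 ≤ Z u := by have := hZeff u; omega
    intro v
    refine walk_prop (fun w => 1 ≤ Z w) ?_ u v ((hconn.preconnected u v).some) hu1
    intro a b hab ha
    by_contra hb
    have hb0 : Z b = 0 := by have := hZeff b; omega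
    have hmem : a ∈ G.neighborFinset b := (SimpleGraph.mem_neighborFinset _ _ _).2 hab.symm
    have hSb : 1 ≤ S b := le_trans ha (Finset.single_le_sum (fun j _ => hZeff j) hmem)
    have := hZnef b
    rw [hpair b, hb0] at this
    simp at this
    omega
  have hSν : ∀ j, S (ν j) = 2 := by
    intro j
    have hne : ν j ≠ i₀ := fun h => G.irrefl (h ▸ hnbr j)
    have := h2 (ν j) hne
    rw [hpair2, hred j] at this
    linarith
  have hclaim2 : ∀ j v, G.Adj (ν j) v → v = i₀ := by
    intro j v hv
    by_contra hvne
    have h1m : i₀ ∈ G.neighborFinset (ν j) := (SimpleGraph.mem_neighborFinset _ _ _).2 (hnbr j).symm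
    have h2m : v ∈ G.neighborFinset (ν j) := (SimpleGraph.mem_neighborFinset _ _ _).2 hv
    have hsub : ({i₀, v} : Finset (Fin n)) ⊆ G.neighborFinset (ν j) := by
      intro x hx
      rcases Finset.mem_insert.1 hx with rfl | hx
      · exact h1m
      · rw [Finset.mem_singleton] at hx; exact hx ▸ h2m
    have hsum : ∑ k ∈ ({i₀, v} : Finset (Fin n)), Z k = Z i₀ + Z v :=
      Finset.sum_pair (Ne.symm hvne)
    have h3 : (3 : ℤ) ≤ ∑ k ∈ ({i₀, v} : Finset (Fin n)), Z k := by
      rw [hsum, hz₀]; have := hpos v; omega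
    have h4 : ∑ k ∈ ({i₀, v} : Finset (Fin n)), Z k ≤ S (ν j) :=
      Finset.sum_le_sum_of_subset_of_nonneg hsub (fun k _ _ => hZeff k)
    have := hSν j
    omega
  have hclaim1 : ∀ v : Fin n, v = i₀ ∨ ∃ j, ν j = v := by
    intro v
    refine walk_prop (fun w => w = i₀ ∨ ∃ j, ν j = w) ?_ i₀ v
      ((hconn.preconnected i₀ v).some) (Or.inl rfl)
    intro a b hab ha
    rcases ha with rfl | ⟨j, rfl⟩
    · exact Or.inr (hall b hab)
    · exact Or.inl (hclaim2 j b hab)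
  have himg : G.neighborFinset i₀ = Finset.univ.image ν := by
    ext v
    simp only [SimpleGraph.mem_neighborFinset, Finset.mem_image, Finset.mem_univ, true_and]
    exact ⟨fun h => hall v h, fun ⟨j, hj⟩ => hj ▸ hnbr j⟩
  have hSi₀ : S i₀ = (r : ℤ) := by
    show (∑ j ∈ G.neighborFinset i₀, Z j) = (r : ℤ)
    rw [himg, Finset.sum_image (fun a _ b _ h => hinj h)]
    simp [hred]
  have hfin := h1
  rw [hpair2 i₀, hz₀, hSi₀] at hfin
  exact ⟨hclaim1, hclaim2, by linarith⟩
end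

section
/- Let M be a symmetric integer intersection matrix on indices {1,…,n}, K a rational vector with K·e_i = -e_i·e_i - 2 for all i (so that χ(e_i) = 1 for each i), and define χ(C) = -C·(C+K)/2. Let C_1 = e_{j_1}, C_i = C_{i-1} + e_{j_i} (1 < i ≤ m) be a computation sequence, meaning C_{i-1}·e_{j_i} ≥ 1 for 1 < i ≤ m. Then χ(C_m) = m - Σ_{i=2}^m C_{i-1}·e_{j_i}; consequently χ(C_m) = 1 if and only if C_{i-1}·e_{j_i} = 1 for all 1 < i ≤ m, and in all cases χ(C_m) ≤ 1. -/
/-- The pairing `x·y = xᵗ M y` over `ℚ` with entries of `M` cast to `ℚ`. -/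
def pairQ {n : ℕ} (M : Matrix (Fin n) (Fin n) ℤ) (x y : Fin n → ℚ) : ℚ :=
  dotProduct x ((M.map (Int.cast : ℤ → ℚ)).mulVec y)

lemma pairQ_add_left {n : ℕ} (M : Matrix (Fin n) (Fin n) ℤ) (x y z : Fin n → ℚ) :
    pairQ M (x + y) z = pairQ M x z + pairQ M y z := by
  simp [pairQ, add_dotProduct]

lemma pairQ_add_right {n : ℕ} (M : Matrix (Fin n) (Fin n) ℤ) (x y z : Fin n → ℚ) :
    pairQ M x (y + z) = pairQ M x y + pairQ M x z := by
  simp [pairQ, Matrix.mulVec_add, dotProduct_add]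

lemma pairQ_symm {n : ℕ} (M : Matrix (Fin n) (Fin n) ℤ) (hsym : M.IsSymm)
    (x y : Fin n → ℚ) : pairQ M x y = pairQ M y x := by
  have h : (M.map (Int.cast : ℤ → ℚ)).IsSymm := by
    rw [Matrix.IsSymm, ← Matrix.transpose_map, hsym]
  rw [pairQ, pairQ, Matrix.dotProduct_mulVec, ← Matrix.mulVec_transpose, h,
    dotProduct_comm]

lemma pairQ_cast {n : ℕ} (M : Matrix (Fin n) (Fin n) ℤ) (x y : Fin n → ℤ) :
    pairQ M (fun k => (x k : ℚ)) (fun k => (y k : ℚ)) = (pairZ M x y : ℚ) := by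
  simp [pairQ, pairZ, dotProduct, Matrix.mulVec, Finset.mul_sum]

lemma cast_single {n : ℕ} (i : Fin n) :
    (fun k => ((Pi.single i 1 : Fin n → ℤ) k : ℚ)) = Pi.single i 1 := by
  funext k
  by_cases h : k = i <;> simp [h, Pi.single_apply]

/-- Artin's rationality criterion via computation sequences: if each `e_i` has
`χ(e_i) = 1` (adjunction) and `C_1 = e_{j_1}`, `C_i = C_{i-1} + e_{j_i}` with
`C_{i-1}·e_{j_i} ≥ 1`, then `χ(C_m) = m - Σ_{i=2}^m C_{i-1}·e_{j_i}`; hence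
`χ(C_m) = 1` iff all these pairings equal `1`, and in any case `χ(C_m) ≤ 1`. -/
theorem stmt_13 {n : ℕ} (M : Matrix (Fin n) (Fin n) ℤ) (hsym : M.IsSymm)
    (K : Fin n → ℚ)
    (hK : ∀ i, pairQ M K (Pi.single i 1) =
      -pairQ M (Pi.single i 1) (Pi.single i 1) - 2)
    (χ : (Fin n → ℤ) → ℚ)
    (hχ : ∀ D : Fin n → ℤ, χ D =
      -(pairQ M (fun k => (D k : ℚ)) ((fun k => (D k : ℚ)) + K)) / 2)
    (m : ℕ) (hm : 1 ≤ m) (j : ℕ → Fin n) (C : ℕ → Fin n → ℤ)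
    (hC0 : C 0 = Pi.single (j 0) 1)
    (hCs : ∀ i : ℕ, i + 1 < m → C (i + 1) = C i + Pi.single (j (i + 1)) 1)
    (hstep : ∀ i : ℕ, i + 1 < m → 1 ≤ pairZ M (C i) (Pi.single (j (i + 1)) 1)) :
    χ (C (m - 1)) =
      (m : ℚ) - ∑ i ∈ Finset.range (m - 1),
        (pairZ M (C i) (Pi.single (j (i + 1)) 1) : ℚ) ∧
    (χ (C (m - 1)) = 1 ↔
      ∀ i : ℕ, i + 1 < m → pairZ M (C i) (Pi.single (j (i + 1)) 1) = 1) ∧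
    χ (C (m - 1)) ≤ 1 := by
  -- χ of a basis vector is 1
  have hchi1 : ∀ i : Fin n, χ (Pi.single i 1) = 1 := by
    intro i
    rw [hχ, cast_single, pairQ_add_right,
      pairQ_symm M hsym (Pi.single i 1) K, hK]
    ring
  -- the key step formula
  have hχadd : ∀ (D : Fin n → ℤ) (i : Fin n),
      χ (D + Pi.single i 1) = χ D + 1 - (pairZ M D (Pi.single i 1) : ℚ) := by
    intro D i
    have hcast : (fun k => (((D + (Pi.single i 1 : Fin n → ℤ)) k : ℤ) : ℚ)) =
        (fun k => (D k : ℚ)) + (fun k => ((Pi.single i 1 : Fin n → ℤ) k : ℚ)) := by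
      funext k; simp [Pi.add_apply]
    rw [hχ, hcast, cast_single]
    rw [hχ D]
    have h1 : χ (Pi.single i 1) = 1 := hchi1 i
    rw [hχ, cast_single] at h1
    have hsy : pairQ M (Pi.single i 1) (fun k => (D k : ℚ)) =
        pairQ M (fun k => (D k : ℚ)) (Pi.single i 1) := pairQ_symm M hsym _ _
    have hc : pairQ M (fun k => (D k : ℚ)) (fun k => ((Pi.single i 1 : Fin n → ℤ) k : ℚ))
        = (pairZ M D (Pi.single i 1) : ℚ) := pairQ_cast M D _
    rw [cast_single] at hc
    have expand : pairQ M ((fun k => (D k : ℚ)) + Pi.single i 1)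
        ((fun k => (D k : ℚ)) + Pi.single i 1 + K)
        = pairQ M (fun k => (D k : ℚ)) ((fun k => (D k : ℚ)) + K)
          + pairQ M (Pi.single i 1) ((Pi.single i 1 : Fin n → ℚ) + K)
          + 2 * (pairZ M D (Pi.single i 1) : ℚ) := by
      simp only [pairQ_add_left, pairQ_add_right]
      rw [hsy, hc]
      ring
    rw [expand]
    linarith [h1]
  -- main formula by induction
  have key : ∀ t : ℕ, t < m → χ (C t) = (t + 1 : ℚ) -
      ∑ i ∈ Finset.range t, (pairZ M (C i) (Pi.single (j (i + 1)) 1) : ℚ) := by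
    intro t
    induction t with
    | zero => intro _; simp [hC0, hchi1]
    | succ t ih =>
      intro ht
      have ht' : t < m := Nat.lt_of_succ_lt ht
      rw [hCs t ht, hχadd, ih ht', Finset.sum_range_succ]
      push_cast
      ring
  have hm1 : m - 1 < m := Nat.sub_lt hm Nat.one_pos
  have hcast : ((m - 1 : ℕ) : ℚ) + 1 = (m : ℚ) := by
    have : (m - 1 : ℕ) + 1 = m := Nat.succ_pred_eq_of_pos hm
    exact_mod_cast congrArg (Nat.cast : ℕ → ℚ) this
  have main : χ (C (m - 1)) = (m : ℚ) -
      ∑ i ∈ Finset.range (m - 1), (pairZ M (C i) (Pi.single (j (i + 1)) 1) : ℚ) := by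
    rw [key (m - 1) hm1, hcast]
  have hmem : ∀ i ∈ Finset.range (m - 1), i + 1 < m := by
    intro i hi
    simp only [Finset.mem_range] at hi
    omega
  refine ⟨main, ?_, ?_⟩
  · constructor
    · intro h1 i hi
      have hi' : i ∈ Finset.range (m - 1) := by
        simp only [Finset.mem_range]; omega
      -- work in ℤ
      have hsum : ∑ i ∈ Finset.range (m - 1),
          pairZ M (C i) (Pi.single (j (i + 1)) 1) = (m - 1 : ℤ) := by
        have : ((∑ i ∈ Finset.range (m - 1),
            pairZ M (C i) (Pi.single (j (i + 1)) 1) : ℤ) : ℚ) = ((m : ℚ) - 1) := by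
          push_cast
          rw [main] at h1
          linarith
        have hm1c : ((m : ℚ) - 1) = ((m - 1 : ℤ) : ℚ) := by push_cast; ring
        rw [hm1c] at this
        exact_mod_cast this
      have hzero : ∑ i ∈ Finset.range (m - 1),
          (pairZ M (C i) (Pi.single (j (i + 1)) 1) - 1) = 0 := by
        rw [Finset.sum_sub_distrib, hsum]
        simp
        omega
      have := (Finset.sum_eq_zero_iff_of_nonneg (fun i hi => by
        have := hstep i (hmem i hi); omega)).mp hzero i hi'
      omega
    · intro hall
      rw [main]
      have : ∀ i ∈ Finset.range (m - 1),
          (pairZ M (C i) (Pi.single (j (i + 1)) 1) : ℚ) = 1 := by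
        intro i hi
        rw [hall i (hmem i hi)]
        norm_num
      rw [Finset.sum_congr rfl this, Finset.sum_const, Finset.card_range]
      have : ((m - 1 : ℕ) : ℚ) = (m : ℚ) - 1 := by
        rw [← hcast]; ring
      simp [this]
  · rw [main]
    have hge : ((m - 1 : ℕ) : ℚ) ≤ ∑ i ∈ Finset.range (m - 1),
        (pairZ M (C i) (Pi.single (j (i + 1)) 1) : ℚ) := by
      calc ((m - 1 : ℕ) : ℚ) = ∑ _i ∈ Finset.range (m - 1), (1 : ℚ) := by
            simp
        _ ≤ _ := by
            apply Finset.sum_le_sum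
            intro i hi
            exact_mod_cast hstep i (hmem i hi)
    have : ((m - 1 : ℕ) : ℚ) = (m : ℚ) - 1 := by rw [← hcast]; ring
    linarith [hge, this.symm.le]
end
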